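/- In the inhomogeneous Hamilton algebra IHa(N) (N ≥ 3), the elements J_ij' := J_ij T² + (G_i Q_j − G_j Q_i) T + (F_i P_j − F_j P_i) T + (P_i Q_j − P_j Q_i) R of U(IHa(N)) commute with every generator of the radical: [J_ij', Y] = 0 for Y ∈ {G_k, F_k, Q_k, P_k, R, E, T}. -/

import Mathlib

open UniversalEnvelopingAlgebra

private lemma IHa_mulLie {A : Type*} [Ring A] (a b c : A) :
    ⁅a * b, c⁆ = a * ⁅b, c⁆ + ⁅a, c⁆ * b := by
  simp only [Ring.lie_def]; noncomm_ring

private lemma IHa_swapL {A : Type*} [Ring A] {a b : A} (h : a * b = b * a) (c : A) :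
    a * (b * c) = b * (a * c) := by rw [← mul_assoc, h, mul_assoc]


/-- Kronecker delta with values in a field `k`. -/
def kdelta (k : Type*) [Field k] {N : ℕ} (a b : Fin N) : k := if a = b then 1 else 0

/-- In `IHa(N)` (`N ≥ 3`), the elements
`J'_ij = J_ij T² + (G_i Q_j − G_j Q_i)T + (F_i P_j − F_j P_i)T + (P_i Q_j − P_j Q_i)R`
of `U(IHa(N))` commute with every generator of the radical. -/
theorem IHa_virtual_copy_commutes_radical
    (k : Type*) [Field k] (g : Type*) [LieRing g] [LieAlgebra k g] (N : ℕ) (hN : 3 ≤ N)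
    (J : Fin N → Fin N → g) (G F Q P : Fin N → g) (R E T : g)
    (hJa : ∀ i j, J i j = -J j i)
    (hJJ : ∀ i j l m, ⁅J i j, J l m⁆ =
      kdelta k i m • J j l + kdelta k j l • J i m - kdelta k j m • J i l - kdelta k i l • J j m)
    (hJG : ∀ i j l, ⁅J i j, G l⁆ = -(kdelta k i l • G j) + kdelta k j l • G i)
    (hJF : ∀ i j l, ⁅J i j, F l⁆ = -(kdelta k i l • F j) + kdelta k j l • F i)
    (hJQ : ∀ i j l, ⁅J i j, Q l⁆ = -(kdelta k i l • Q j) + kdelta k j l • Q i)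
    (hJP : ∀ i j l, ⁅J i j, P l⁆ = -(kdelta k i l • P j) + kdelta k j l • P i)
    (hGF : ∀ i j, ⁅G i, F j⁆ = kdelta k i j • R)
    (hGQ : ∀ i j, ⁅G i, Q j⁆ = kdelta k i j • T)
    (hFP : ∀ i j, ⁅F i, P j⁆ = kdelta k i j • T)
    (hEG : ∀ i, ⁅E, G i⁆ = -P i) (hEF : ∀ i, ⁅E, F i⁆ = Q i)
    (hER : ⁅E, R⁆ = (2 : k) • T)
    (hGG : ∀ i j, ⁅G i, G j⁆ = 0) (hFF : ∀ i j, ⁅F i, F j⁆ = 0)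
    (hQQ : ∀ i j, ⁅Q i, Q j⁆ = 0) (hPP : ∀ i j, ⁅P i, P j⁆ = 0)
    (hGP : ∀ i j, ⁅G i, P j⁆ = 0) (hFQ : ∀ i j, ⁅F i, Q j⁆ = 0)
    (hQP : ∀ i j, ⁅Q i, P j⁆ = 0)
    (hJR : ∀ i j, ⁅J i j, R⁆ = 0) (hJE : ∀ i j, ⁅J i j, E⁆ = 0)
    (hJT : ∀ i j, ⁅J i j, T⁆ = 0)
    (hGR : ∀ i, ⁅G i, R⁆ = 0) (hFR : ∀ i, ⁅F i, R⁆ = 0)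
    (hQR : ∀ i, ⁅Q i, R⁆ = 0) (hPR : ∀ i, ⁅P i, R⁆ = 0)
    (hGT : ∀ i, ⁅G i, T⁆ = 0) (hFT : ∀ i, ⁅F i, T⁆ = 0)
    (hQT : ∀ i, ⁅Q i, T⁆ = 0) (hPT : ∀ i, ⁅P i, T⁆ = 0)
    (hRT : ⁅R, T⁆ = 0) (hET : ⁅E, T⁆ = 0)
    (hEQ : ∀ i, ⁅E, Q i⁆ = 0) (hEP : ∀ i, ⁅E, P i⁆ = 0)
 :
    ∀ i j l,
      ⁅(fun a b => (ι k (J a b) : UniversalEnvelopingAlgebra k g) * ι k T ^ 2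
      + (ι k (G a) * ι k (Q b) - ι k (G b) * ι k (Q a)) * ι k T
      + (ι k (F a) * ι k (P b) - ι k (F b) * ι k (P a)) * ι k T
      + (ι k (P a) * ι k (Q b) - ι k (P b) * ι k (Q a)) * ι k R) i j, ι k (G l)⁆ = 0
      ∧ ⁅(fun a b => (ι k (J a b) : UniversalEnvelopingAlgebra k g) * ι k T ^ 2
      + (ι k (G a) * ι k (Q b) - ι k (G b) * ι k (Q a)) * ι k T
      + (ι k (F a) * ι k (P b) - ι k (F b) * ι k (P a)) * ι k T
      + (ι k (P a) * ι k (Q b) - ι k (P b) * ι k (Q a)) * ι k R) i j, ι k (F l)⁆ = 0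
      ∧ ⁅(fun a b => (ι k (J a b) : UniversalEnvelopingAlgebra k g) * ι k T ^ 2
      + (ι k (G a) * ι k (Q b) - ι k (G b) * ι k (Q a)) * ι k T
      + (ι k (F a) * ι k (P b) - ι k (F b) * ι k (P a)) * ι k T
      + (ι k (P a) * ι k (Q b) - ι k (P b) * ι k (Q a)) * ι k R) i j, ι k (Q l)⁆ = 0
      ∧ ⁅(fun a b => (ι k (J a b) : UniversalEnvelopingAlgebra k g) * ι k T ^ 2
      + (ι k (G a) * ι k (Q b) - ι k (G b) * ι k (Q a)) * ι k T
      + (ι k (F a) * ι k (P b) - ι k (F b) * ι k (P a)) * ι k T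
      + (ι k (P a) * ι k (Q b) - ι k (P b) * ι k (Q a)) * ι k R) i j, ι k (P l)⁆ = 0
      ∧ ⁅(fun a b => (ι k (J a b) : UniversalEnvelopingAlgebra k g) * ι k T ^ 2
      + (ι k (G a) * ι k (Q b) - ι k (G b) * ι k (Q a)) * ι k T
      + (ι k (F a) * ι k (P b) - ι k (F b) * ι k (P a)) * ι k T
      + (ι k (P a) * ι k (Q b) - ι k (P b) * ι k (Q a)) * ι k R) i j, ι k R⁆ = 0
      ∧ ⁅(fun a b => (ι k (J a b) : UniversalEnvelopingAlgebra k g) * ι k T ^ 2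
      + (ι k (G a) * ι k (Q b) - ι k (G b) * ι k (Q a)) * ι k T
      + (ι k (F a) * ι k (P b) - ι k (F b) * ι k (P a)) * ι k T
      + (ι k (P a) * ι k (Q b) - ι k (P b) * ι k (Q a)) * ι k R) i j, ι k E⁆ = 0
      ∧ ⁅(fun a b => (ι k (J a b) : UniversalEnvelopingAlgebra k g) * ι k T ^ 2
      + (ι k (G a) * ι k (Q b) - ι k (G b) * ι k (Q a)) * ι k T
      + (ι k (F a) * ι k (P b) - ι k (F b) * ι k (P a)) * ι k T
      + (ι k (P a) * ι k (Q b) - ι k (P b) * ι k (Q a)) * ι k R) i j, ι k T⁆ = 0 := by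
  
  intro i j l
  letI := LieRing.ofAssociativeRing (A := UniversalEnvelopingAlgebra k g)
  have key : ∀ x y : g, ⁅(ι k x : UniversalEnvelopingAlgebra k g), ι k y⁆ = ι k ⁅x, y⁆ :=
    fun x y => by
      letI := LieRing.ofAssociativeRing (A := UniversalEnvelopingAlgebra k g)
      exact ((ι k).map_lie x y).symm
  -- skew-symmetric versions of the bracket relations
  have hQG : ∀ a b, ⁅Q a, G b⁆ = -(kdelta k b a • T) := fun a b => by rw [← lie_skew, hGQ]
  have hFG : ∀ a b, ⁅F a, G b⁆ = -(kdelta k b a • R) := fun a b => by rw [← lie_skew, hGF]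
  have hPG : ∀ a b, ⁅P a, G b⁆ = 0 := fun a b => by rw [← lie_skew, hGP, neg_zero]
  have hPF : ∀ a b, ⁅P a, F b⁆ = -(kdelta k b a • T) := fun a b => by rw [← lie_skew, hFP]
  have hQF : ∀ a b, ⁅Q a, F b⁆ = 0 := fun a b => by rw [← lie_skew, hFQ, neg_zero]
  have hPQ : ∀ a b, ⁅P a, Q b⁆ = 0 := fun a b => by rw [← lie_skew, hQP, neg_zero]
  have hGE : ∀ a, ⁅G a, E⁆ = P a := fun a => by rw [← lie_skew, hEG, neg_neg]
  have hFE : ∀ a, ⁅F a, E⁆ = -Q a := fun a => by rw [← lie_skew, hEF]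
  have hQE : ∀ a, ⁅Q a, E⁆ = 0 := fun a => by rw [← lie_skew, hEQ, neg_zero]
  have hPE : ∀ a, ⁅P a, E⁆ = 0 := fun a => by rw [← lie_skew, hEP, neg_zero]
  have hRE : ⁅R, E⁆ = -((2 : k) • T) := by rw [← lie_skew, hER]
  have hRG : ∀ a, ⁅R, G a⁆ = 0 := fun a => by rw [← lie_skew, hGR, neg_zero]
  have hRF : ∀ a, ⁅R, F a⁆ = 0 := fun a => by rw [← lie_skew, hFR, neg_zero]
  have hRQ : ∀ a, ⁅R, Q a⁆ = 0 := fun a => by rw [← lie_skew, hQR, neg_zero]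
  have hRP : ∀ a, ⁅R, P a⁆ = 0 := fun a => by rw [← lie_skew, hPR, neg_zero]
  have hRR : ⁅R, R⁆ = 0 := lie_self R
  have hTG : ∀ a, ⁅T, G a⁆ = 0 := fun a => by rw [← lie_skew, hGT, neg_zero]
  have hTF : ∀ a, ⁅T, F a⁆ = 0 := fun a => by rw [← lie_skew, hFT, neg_zero]
  have hTQ : ∀ a, ⁅T, Q a⁆ = 0 := fun a => by rw [← lie_skew, hQT, neg_zero]
  have hTP : ∀ a, ⁅T, P a⁆ = 0 := fun a => by rw [← lie_skew, hPT, neg_zero]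
  have hTR : ⁅T, R⁆ = 0 := by rw [← lie_skew, hRT, neg_zero]
  have hTE : ⁅T, E⁆ = 0 := by rw [← lie_skew, hET, neg_zero]
  have hTT : ⁅T, T⁆ = 0 := lie_self T
  -- commutation facts in the enveloping algebra
  have cmu : ∀ x y : g, ⁅x, y⁆ = 0 →
      (ι k x : UniversalEnvelopingAlgebra k g) * ι k y = ι k y * ι k x := by
    intro x y h
    have h2 := key x y
    rw [h, map_zero, Ring.lie_def, sub_eq_zero] at h2
    exact h2
  have sQP : ∀ a b, (ι k (Q a) : UniversalEnvelopingAlgebra k g) * ι k (P b)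
      = ι k (P b) * ι k (Q a) := fun a b => cmu _ _ (hQP a b)
  have sRG : ∀ a, (ι k R : UniversalEnvelopingAlgebra k g) * ι k (G a)
      = ι k (G a) * ι k R := fun a => cmu _ _ (hRG a)
  have sRF : ∀ a, (ι k R : UniversalEnvelopingAlgebra k g) * ι k (F a)
      = ι k (F a) * ι k R := fun a => cmu _ _ (hRF a)
  have sRQ : ∀ a, (ι k R : UniversalEnvelopingAlgebra k g) * ι k (Q a)
      = ι k (Q a) * ι k R := fun a => cmu _ _ (hRQ a)
  have sRP : ∀ a, (ι k R : UniversalEnvelopingAlgebra k g) * ι k (P a)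
      = ι k (P a) * ι k R := fun a => cmu _ _ (hRP a)
  have sTG : ∀ a, (ι k T : UniversalEnvelopingAlgebra k g) * ι k (G a)
      = ι k (G a) * ι k T := fun a => cmu _ _ (hTG a)
  have sTF : ∀ a, (ι k T : UniversalEnvelopingAlgebra k g) * ι k (F a)
      = ι k (F a) * ι k T := fun a => cmu _ _ (hTF a)
  have sTQ : ∀ a, (ι k T : UniversalEnvelopingAlgebra k g) * ι k (Q a)
      = ι k (Q a) * ι k T := fun a => cmu _ _ (hTQ a)
  have sTP : ∀ a, (ι k T : UniversalEnvelopingAlgebra k g) * ι k (P a)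
      = ι k (P a) * ι k T := fun a => cmu _ _ (hTP a)
  have sTR : (ι k T : UniversalEnvelopingAlgebra k g) * ι k R = ι k R * ι k T :=
    cmu _ _ hTR
  have sPG : ∀ a b, (ι k (P a) : UniversalEnvelopingAlgebra k g) * ι k (G b)
      = ι k (G b) * ι k (P a) := fun a b => cmu _ _ (hPG a b)
  have sQF : ∀ a b, (ι k (Q a) : UniversalEnvelopingAlgebra k g) * ι k (F b)
      = ι k (F b) * ι k (Q a) := fun a b => cmu _ _ (hQF a b)
  refine ⟨?_, ?_, ?_, ?_, ?_, ?_, ?_⟩ <;>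
  · simp only [pow_two, add_lie, sub_lie, IHa_mulLie, key, hJG, hJF, hJQ, hJP, hJR, hJE, hJT,
      hGG, hGF, hGQ, hGP, hGR, hGT, hGE, hFF, hFG, hFP, hFQ, hFR, hFT, hFE,
      hQQ, hQG, hQF, hQP, hQR, hQT, hQE, hPP, hPG, hPF, hPQ, hPR, hPT, hPE,
      hRG, hRF, hRQ, hRP, hRR, hRT, hRE, hTG, hTF, hTQ, hTP, hTR, hTE, hTT,
      map_zero, map_add, map_neg, map_smul,
      mul_zero, zero_mul, add_zero, zero_add, neg_zero, mul_neg, neg_mul,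
      mul_add, add_mul, sub_mul, mul_sub, mul_smul_comm, smul_mul_assoc, mul_assoc]
    have kd1 : kdelta k l i = kdelta k i l := by simp [kdelta, eq_comm]
    have kd2 : kdelta k l j = kdelta k j l := by simp [kdelta, eq_comm]
    try simp only [kd1, kd2]
    by_cases hil : i = l <;> by_cases hjl : j = l <;>
      (try simp only [kdelta, hil, hjl, if_true, if_false, ite_true, ite_false, one_smul,
        zero_smul, smul_zero, neg_zero, mul_zero, zero_mul, add_zero, zero_add, sub_zero,
        zero_sub, neg_neg, mul_add, add_mul, sub_mul, mul_sub, sub_self, sub_neg_eq_add,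
        mul_smul_comm, smul_mul_assoc, mul_assoc, if_neg, if_pos]) <;>
      (try simp only [mul_assoc, sQP, sRG, sRF, sRQ, sRP, sTG, sTF, sTQ, sTP, sTR,
        sPG, sQF, IHa_swapL (sQP _ _), IHa_swapL (sRG _), IHa_swapL (sRF _),
        IHa_swapL (sRQ _), IHa_swapL (sRP _), IHa_swapL (sTG _), IHa_swapL (sTF _),
        IHa_swapL (sTQ _), IHa_swapL (sTP _), IHa_swapL sTR, IHa_swapL (sPG _ _),
        IHa_swapL (sQF _ _)]) <;>
      module
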